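/- Let S : [0, T] → ℝ be continuous, ξ ∈ ℝ, n > 0, ε > 0 and t ∈ [0, T] with t + ε ≤ T. Define S̃_t^n := e^{n(t−T)}(ξ − S(t)) + ∫_t^T n e^{n(t−s)} (S(s) − S(t)) ds. Then |S̃_t^n| ≤ e^{n(t−T)} |ξ − S(t)| + e^{−nε} sup_{s ∈ [t+ε, T]} |S(s) − S(t)| + sup_{s ∈ [t, t+ε]} |S(s) − S(t)|. -/

import Mathlib

open Real intervalIntegral

lemma exp_kernel_integral (n t a b : ℝ) :
    ∫ s in a..b, n * Real.exp (n * (t - s)) =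
      Real.exp (n * (t - a)) - Real.exp (n * (t - b)) := by
  have hderiv : ∀ s ∈ Set.uIcc a b,
      HasDerivAt (fun s => -Real.exp (n * (t - s))) (n * Real.exp (n * (t - s))) s := by
    intro s _
    have h1 : HasDerivAt (fun s : ℝ => n * (t - s)) (-n) s := by
      simpa using ((hasDerivAt_id s).const_sub t).const_mul n
    have h3 := h1.exp.neg
    have h4 : n * Real.exp (n * (t - s)) = -(Real.exp (n * (t - s)) * -n) := by ring
    rw [h4]
    exact h3
  have hint : IntervalIntegrable (fun s => n * Real.exp (n * (t - s))) MeasureTheory.volume a b := by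
    apply Continuous.intervalIntegrable
    continuity
  rw [intervalIntegral.integral_eq_sub_of_hasDerivAt hderiv hint]
  ring

lemma piece_bound (T : ℝ) (S : ℝ → ℝ)
    (hS : ContinuousOn S (Set.Icc 0 T)) (n t a b : ℝ) (hn : 0 < n)
    (hab : a ≤ b) (h0 : 0 ≤ a) (hbT : b ≤ T) :
    |∫ s in a..b, n * Real.exp (n * (t - s)) * (S s - S t)| ≤
      sSup ((fun s => |S s - S t|) '' Set.Icc a b) *
        (Real.exp (n * (t - a)) - Real.exp (n * (t - b))) := by
  set M := sSup ((fun s => |S s - S t|) '' Set.Icc a b) with hM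
  have hsub : Set.Icc a b ⊆ Set.Icc 0 T := Set.Icc_subset_Icc h0 hbT
  have hcontabs : ContinuousOn (fun s => |S s - S t|) (Set.Icc a b) :=
    ((hS.mono hsub).sub continuousOn_const).abs
  have hbdd : BddAbove ((fun s => |S s - S t|) '' Set.Icc a b) :=
    (isCompact_Icc.image_of_continuousOn hcontabs).bddAbove
  have hle : ∀ s ∈ Set.Icc a b, |S s - S t| ≤ M := fun s hs =>
    le_csSup hbdd ⟨s, hs, rfl⟩
  have hintS : IntervalIntegrable (fun s => n * Real.exp (n * (t - s)) * (S s - S t))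
      MeasureTheory.volume a b := by
    apply ContinuousOn.intervalIntegrable
    rw [Set.uIcc_of_le hab]
    exact (continuousOn_const.mul (Real.continuous_exp.comp (by continuity)).continuousOn).mul
      ((hS.mono hsub).sub continuousOn_const)
  have habs : IntervalIntegrable (fun s => |n * Real.exp (n * (t - s)) * (S s - S t)|)
      MeasureTheory.volume a b := hintS.abs
  have hintg : IntervalIntegrable (fun s => n * Real.exp (n * (t - s)) * M)
      MeasureTheory.volume a b := by
    apply Continuous.intervalIntegrable; continuity
  calc |∫ s in a..b, n * Real.exp (n * (t - s)) * (S s - S t)|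
      ≤ ∫ s in a..b, |n * Real.exp (n * (t - s)) * (S s - S t)| :=
        intervalIntegral.abs_integral_le_integral_abs hab
    _ ≤ ∫ s in a..b, n * Real.exp (n * (t - s)) * M := by
        apply intervalIntegral.integral_mono_on hab habs hintg
        intro s hs
        rw [abs_mul, abs_mul, abs_of_pos hn, abs_of_pos (Real.exp_pos _)]
        exact mul_le_mul_of_nonneg_left (hle s hs) (by positivity)
    _ = M * (Real.exp (n * (t - a)) - Real.exp (n * (t - b))) := by
        rw [intervalIntegral.integral_mul_const, exp_kernel_integral]
        ring

theorem penalization_obstacle_estimate (T : ℝ) (S : ℝ → ℝ)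
    (hS : ContinuousOn S (Set.Icc 0 T)) (ξ n ε t : ℝ)
    (hn : 0 < n) (hε : 0 < ε) (ht : t ∈ Set.Icc 0 T) (htε : t + ε ≤ T) :
    |Real.exp (n * (t - T)) * (ξ - S t) +
        ∫ s in t..T, n * Real.exp (n * (t - s)) * (S s - S t)| ≤
      Real.exp (n * (t - T)) * |ξ - S t| +
        Real.exp (-n * ε) * sSup ((fun s => |S s - S t|) '' Set.Icc (t + ε) T) +
        sSup ((fun s => |S s - S t|) '' Set.Icc t (t + ε)) := by
  obtain ⟨ht0, htT⟩ := ht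
  set M1 := sSup ((fun s => |S s - S t|) '' Set.Icc t (t + ε)) with hM1
  set M2 := sSup ((fun s => |S s - S t|) '' Set.Icc (t + ε) T) with hM2
  have htε' : t ≤ t + ε := by linarith
  have hint : ∀ a b, 0 ≤ a → b ≤ T → a ≤ b →
      IntervalIntegrable (fun s => n * Real.exp (n * (t - s)) * (S s - S t))
        MeasureTheory.volume a b := by
    intro a b h0 hb hab
    apply ContinuousOn.intervalIntegrable
    rw [Set.uIcc_of_le hab]
    exact (continuousOn_const.mul (Real.continuous_exp.comp (by continuity)).continuousOn).mul
      ((hS.mono (Set.Icc_subset_Icc h0 hb)).sub continuousOn_const)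
  have hsplit : (∫ s in t..T, n * Real.exp (n * (t - s)) * (S s - S t)) =
      (∫ s in t..(t + ε), n * Real.exp (n * (t - s)) * (S s - S t)) +
      (∫ s in (t + ε)..T, n * Real.exp (n * (t - s)) * (S s - S t)) :=
    (intervalIntegral.integral_add_adjacent_intervals
      (hint t (t + ε) ht0 htε htε') (hint (t + ε) T (by linarith) le_rfl htε)).symm
  have hb1 := piece_bound T S hS n t t (t + ε) hn htε' ht0 htε
  have hb2 := piece_bound T S hS n t (t + ε) T hn htε (by linarith) le_rfl
  rw [← hM1] at hb1
  rw [← hM2] at hb2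
  have hM1nn : 0 ≤ M1 := by
    have h : |S t - S t| ≤ M1 := by
      apply le_csSup
      · exact (isCompact_Icc.image_of_continuousOn
          (((hS.mono (Set.Icc_subset_Icc ht0 htε)).sub continuousOn_const).abs)).bddAbove
      · exact ⟨t, ⟨le_rfl, htε'⟩, rfl⟩
    exact (abs_nonneg _).trans h
  have hM2nn : 0 ≤ M2 := by
    have h : |S (t + ε) - S t| ≤ M2 := by
      apply le_csSup
      · exact (isCompact_Icc.image_of_continuousOn
          (((hS.mono (Set.Icc_subset_Icc (by linarith) le_rfl)).sub
            continuousOn_const).abs)).bddAbove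
      · exact ⟨t + ε, ⟨le_rfl, htε⟩, rfl⟩
    exact (abs_nonneg _).trans h
  have hexp1 : Real.exp (n * (t - (t + ε))) = Real.exp (-n * ε) := by ring_nf
  rw [hexp1] at hb1 hb2
  have he1 : Real.exp (-n * ε) ≤ 1 := by
    apply Real.exp_le_one_iff.mpr; nlinarith
  have he2 : 0 ≤ Real.exp (n * (t - T)) := (Real.exp_pos _).le
  calc |Real.exp (n * (t - T)) * (ξ - S t) +
        ∫ s in t..T, n * Real.exp (n * (t - s)) * (S s - S t)|
      ≤ Real.exp (n * (t - T)) * |ξ - S t| +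
        (|∫ s in t..(t + ε), n * Real.exp (n * (t - s)) * (S s - S t)| +
         |∫ s in (t + ε)..T, n * Real.exp (n * (t - s)) * (S s - S t)|) := by
        rw [hsplit]
        calc _ ≤ |Real.exp (n * (t - T)) * (ξ - S t)| +
            |(∫ s in t..(t + ε), n * Real.exp (n * (t - s)) * (S s - S t)) +
             (∫ s in (t + ε)..T, n * Real.exp (n * (t - s)) * (S s - S t))| := abs_add_le _ _
          _ ≤ _ := by
            rw [abs_mul, abs_of_pos (Real.exp_pos _)]
            exact add_le_add_right (abs_add_le _ _) _
    _ ≤ Real.exp (n * (t - T)) * |ξ - S t| +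
        (M1 * (Real.exp (n * (t - t)) - Real.exp (-n * ε)) +
         M2 * (Real.exp (-n * ε) - Real.exp (n * (t - T)))) :=
        add_le_add_right (add_le_add hb1 hb2) _
    _ ≤ _ := by
        simp only [sub_self, mul_zero, Real.exp_zero]
        nlinarith [Real.exp_pos (-n * ε), mul_nonneg hM2nn he2]
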